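/- Let n ≥ 2, r = (1-n)/2, l ≥ 0, d ≥ 0, p = 2(l+d-r), and F_{p,l}(φ,θ) = e^{ipφ/2} C̃_d^{l-r}(cos θ) sin^l θ where C̃_d^{l-r} is the (normalized) Gegenbauer polynomial. Then z·F_{p,l} = p F_{p,l}, and n^-·F_{p,l} is a scalar multiple of F_{p-2,l}, with n^-·F_{p,l} = 0 if and only if d = 0 (i.e. p = 2(l-r)). -/

import Mathlib

open Complex

noncomputable def dphi (F : ℝ × ℝ → ℂ) (p : ℝ × ℝ) : ℂ := deriv (fun s => F (s, p.2)) p.1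

noncomputable def dtheta (F : ℝ × ℝ → ℂ) (p : ℝ × ℝ) : ℂ := deriv (fun s => F (p.1, s)) p.2

/-- `z = -2i∂_φ`. -/
noncomputable def zOp (F : ℝ × ℝ → ℂ) : ℝ × ℝ → ℂ := fun p => -2 * Complex.I * dphi F p

/-- `n⁺ = e^{iφ}(r cos θ + i cos θ ∂_φ - sin θ ∂_θ)`. -/
noncomputable def nPlus (r : ℝ) (F : ℝ × ℝ → ℂ) : ℝ × ℝ → ℂ := fun p =>
  Complex.exp (Complex.I * p.1) *
    ((r : ℂ) * Real.cos p.2 * F p + Complex.I * Real.cos p.2 * dphi F p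
      - Real.sin p.2 * dtheta F p)

/-- `n⁻ = e^{-iφ}(r cos θ - i cos θ ∂_φ - sin θ ∂_θ)`. -/
noncomputable def nMinus (r : ℝ) (F : ℝ × ℝ → ℂ) : ℝ × ℝ → ℂ := fun p =>
  Complex.exp (-Complex.I * p.1) *
    ((r : ℂ) * Real.cos p.2 * F p - Complex.I * Real.cos p.2 * dphi F p
      - Real.sin p.2 * dtheta F p)


open Polynomial in
noncomputable def gegenbauer (α : ℝ) : ℕ → Polynomial ℝ
  | 0 => 1
  | 1 => Polynomial.C (2 * α) * Polynomial.X
  | (d + 2) =>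
      Polynomial.C ((2 * ((d : ℝ) + 1 + α)) / ((d : ℝ) + 2)) * Polynomial.X
          * gegenbauer α (d + 1)
        - Polynomial.C (((d : ℝ) + 2 * α) / ((d : ℝ) + 2)) * gegenbauer α d

/-- `F_{p,l}(φ,θ) = e^{ipφ/2}·C_d^{l-r}(cos θ)·sin^l θ`, with `p = 2(l+d-r)`. -/
noncomputable def Ffun (r : ℝ) (l d : ℕ) : ℝ × ℝ → ℂ := fun p =>
  Complex.exp (Complex.I * (((l : ℝ) + d - r : ℝ) : ℂ) * p.1) *
    (((gegenbauer ((l : ℝ) - r) d).eval (Real.cos p.2) : ℝ) : ℂ) *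
    ((Real.sin p.2 : ℝ) : ℂ) ^ l

/- ### Auxiliary material -/

section Aux

open Polynomial

/-- Evaluation of the Gegenbauer polynomial. -/
noncomputable def ge (α : ℝ) (d : ℕ) (x : ℝ) : ℝ := (gegenbauer α d).eval x

/-- Evaluation of the derivative of the Gegenbauer polynomial. -/
noncomputable def ge' (α : ℝ) (d : ℕ) (x : ℝ) : ℝ := ((gegenbauer α d).derivative).eval x

lemma ge_rec (α : ℝ) (k : ℕ) (x : ℝ) :
    ((k:ℝ)+2) * ge α (k+2) x = 2*((k:ℝ)+1+α)*x*ge α (k+1) x - ((k:ℝ)+2*α)*ge α k x := by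
  have h2 : ((k:ℝ)+2) ≠ 0 := by positivity
  simp only [ge, gegenbauer, eval_sub, eval_mul, eval_C, eval_X]
  field_simp
  try ring

lemma ge'_rec (α : ℝ) (k : ℕ) (x : ℝ) :
    ((k:ℝ)+2) * ge' α (k+2) x
      = 2*((k:ℝ)+1+α)*(ge α (k+1) x + x * ge' α (k+1) x) - ((k:ℝ)+2*α)*ge' α k x := by
  have h2 : ((k:ℝ)+2) ≠ 0 := by positivity
  simp only [ge, ge', gegenbauer, derivative_sub, derivative_mul, derivative_C, derivative_X,
    eval_sub, eval_mul, eval_add, eval_C, eval_X, eval_zero, eval_one]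
  field_simp
  try ring

/-- The key Gegenbauer derivative identity:
`(1-x²)·C_{d+1}' = (d+2α)·C_d - (d+1)·x·C_{d+1}`. -/
lemma ge_deriv (α : ℝ) : ∀ (d : ℕ) (x : ℝ),
    (1-x^2) * ge' α (d+1) x = ((d:ℝ)+2*α) * ge α d x - ((d:ℝ)+1)*x*ge α (d+1) x := by
  intro d
  induction d using Nat.twoStepInduction with
  | zero =>
    intro x
    simp only [ge, ge', gegenbauer, derivative_mul, derivative_C, derivative_X,
      eval_mul, eval_add, eval_C, eval_X, eval_zero, eval_one]
    push_cast
    ring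
  | one =>
    intro x
    simp only [ge, ge', gegenbauer, derivative_sub, derivative_mul, derivative_C, derivative_X,
      derivative_one, eval_sub, eval_mul, eval_add, eval_C, eval_X, eval_zero, eval_one]
    push_cast
    field_simp
    try ring
  | more k IH1 IH2 =>
    intro x
    have h3 : ((k:ℝ)+3) ≠ 0 := by positivity
    apply mul_left_cancel₀ h3
    have hrec : ((k:ℝ)+3) * ge α (k+3) x
        = 2*((k:ℝ)+2+α)*x*ge α (k+2) x - ((k:ℝ)+1+2*α)*ge α (k+1) x := by
      have h := ge_rec α (k+1) x
      push_cast at h ⊢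
      linear_combination h
    have hrecp : ((k:ℝ)+2) * ge α (k+2) x
        = 2*((k:ℝ)+1+α)*x*ge α (k+1) x - ((k:ℝ)+2*α)*ge α k x := ge_rec α k x
    have hdrec : ((k:ℝ)+3) * ge' α (k+3) x
        = 2*((k:ℝ)+2+α)*(ge α (k+2) x + x * ge' α (k+2) x) - ((k:ℝ)+1+2*α)*ge' α (k+1) x := by
      have h := ge'_rec α (k+1) x
      push_cast at h ⊢
      linear_combination h
    have IH1' := IH1 x
    have IH2' := IH2 x
    push_cast at IH2' ⊢
    linear_combination (1-x^2)*hdrec + (((k:ℝ)+3)*x)*hrec + (2*((k:ℝ)+2+α)*x)*IH2'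
      - (((k:ℝ)+1+2*α))*IH1' - (((k:ℝ)+1+2*α))*hrecp

/-- Positivity of Gegenbauer polynomials at `1` for `α ≥ 1/2`. -/
lemma ge_one (α : ℝ) (hα : 1 ≤ 2*α) : ∀ d : ℕ, 1 ≤ ge α d 1 ∧ ge α d 1 ≤ ge α (d+1) 1 := by
  intro d
  induction d with
  | zero =>
    constructor
    · simp [ge, gegenbauer]
    · simp [ge, gegenbauer]; linarith
  | succ m IH =>
    obtain ⟨h1, h2⟩ := IH
    have h1' : 1 ≤ ge α (m+1) 1 := le_trans h1 h2
    refine ⟨h1', ?_⟩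
    have hrec := ge_rec α m 1
    have hm2 : (0:ℝ) < (m:ℝ)+2 := by positivity
    have key : ((m:ℝ)+2) * ge α (m+1) 1 ≤ ((m:ℝ)+2) * ge α (m+2) 1 := by
      rw [hrec]
      nlinarith [h2, h1, hα]
    exact le_of_mul_le_mul_left key hm2

lemma cast_pow_sub_one (x : ℝ) (l : ℕ) : (l:ℝ) * x^(l-1) * x = (l:ℝ) * x^l := by
  cases l with
  | zero => simp
  | succ m => simp [pow_succ]; ring

lemma dphi_Ffun (r : ℝ) (l d : ℕ) (p : ℝ × ℝ) :
    dphi (Ffun r l d) p = Complex.I * (((l : ℝ) + d - r : ℝ) : ℂ) * Ffun r l d p := by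
  set μ : ℂ := (((l : ℝ) + d - r : ℝ) : ℂ) with hμ
  have h0 : HasDerivAt (fun z : ℂ => Complex.exp (Complex.I * μ * z))
      (Complex.exp (Complex.I * μ * (p.1:ℂ)) * (Complex.I * μ)) (p.1:ℂ) := by
    simpa using (((hasDerivAt_id ((p.1:ℝ):ℂ)).const_mul (Complex.I * μ))).cexp
  have h1 := (h0.comp_ofReal.mul_const
      ((((gegenbauer ((l : ℝ) - r) d).eval (Real.cos p.2) : ℝ) : ℂ))).mul_const
      (((Real.sin p.2 : ℝ) : ℂ) ^ l)
  have h2 : dphi (Ffun r l d) p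
      = Complex.exp (Complex.I * μ * (p.1:ℂ)) * (Complex.I * μ) *
          ((((gegenbauer ((l : ℝ) - r) d).eval (Real.cos p.2) : ℝ) : ℂ)) *
          (((Real.sin p.2 : ℝ) : ℂ) ^ l) := h1.deriv
  rw [h2, Ffun]
  ring

lemma dtheta_Ffun (r : ℝ) (l d : ℕ) (p : ℝ × ℝ) :
    dtheta (Ffun r l d) p = Complex.exp (Complex.I * (((l : ℝ) + d - r : ℝ) : ℂ) * p.1) *
      ((( ge' ((l:ℝ)-r) d (Real.cos p.2) * (-Real.sin p.2) * (Real.sin p.2)^l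
        + ge ((l:ℝ)-r) d (Real.cos p.2) * ((l:ℝ) * (Real.sin p.2)^(l-1) * Real.cos p.2) : ℝ)):ℂ) := by
  set α : ℝ := (l:ℝ) - r
  set K : ℂ := Complex.exp (Complex.I * (((l : ℝ) + d - r : ℝ) : ℂ) * p.1) with hK
  have hfun : (fun s => Ffun r l d (p.1, s))
      = fun s => K * ((((gegenbauer α d).eval (Real.cos s) * (Real.sin s)^l : ℝ)):ℂ) := by
    funext s
    simp only [Ffun, Complex.ofReal_mul, Complex.ofReal_pow]
    ring
  have hf1 : HasDerivAt (fun s => (gegenbauer α d).eval (Real.cos s))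
      (((gegenbauer α d).derivative).eval (Real.cos p.2) * (-Real.sin p.2)) p.2 :=
    ((gegenbauer α d).hasDerivAt (Real.cos p.2)).comp p.2 (Real.hasDerivAt_cos p.2)
  have hf2 : HasDerivAt (fun s => (Real.sin s)^l)
      ((l:ℝ) * (Real.sin p.2)^(l-1) * Real.cos p.2) p.2 :=
    (Real.hasDerivAt_sin p.2).pow l
  have hf := ((hf1.mul hf2).ofReal_comp).const_mul K
  rw [dtheta, hfun]
  rw [(by exact hf : HasDerivAt (fun s => K * ((((gegenbauer α d).eval (Real.cos s) * (Real.sin s)^l : ℝ)):ℂ)) _ p.2).deriv]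
  rw [hK]
  simp only [ge, ge', Complex.ofReal_add, Complex.ofReal_mul, Complex.ofReal_neg,
    Complex.ofReal_pow, Complex.ofReal_natCast]
  try ring

lemma nMinus_eval (r : ℝ) (l d : ℕ) (p : ℝ × ℝ) :
    nMinus r (Ffun r l d) p =
      Complex.exp (Complex.I * (((l : ℝ) + d - r - 1 : ℝ) : ℂ) * p.1) *
        ((( ((d:ℝ) * Real.cos p.2 * ge ((l:ℝ)-r) d (Real.cos p.2)
            + (1 - (Real.cos p.2)^2) * ge' ((l:ℝ)-r) d (Real.cos p.2)) * (Real.sin p.2)^l : ℝ)):ℂ) := by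
  have hR : (r + ((l:ℝ)+d-r)) * Real.cos p.2
        * ((gegenbauer ((l:ℝ)-r) d).eval (Real.cos p.2)) * (Real.sin p.2)^l
      - (((gegenbauer ((l:ℝ)-r) d).derivative.eval (Real.cos p.2)) * (-Real.sin p.2) * (Real.sin p.2)^l
        + ((gegenbauer ((l:ℝ)-r) d).eval (Real.cos p.2)) * ((l:ℝ) * (Real.sin p.2)^(l-1) * Real.cos p.2))
          * Real.sin p.2
      = ((d:ℝ) * Real.cos p.2 * ((gegenbauer ((l:ℝ)-r) d).eval (Real.cos p.2))
          + (1 - (Real.cos p.2)^2) * ((gegenbauer ((l:ℝ)-r) d).derivative.eval (Real.cos p.2)))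
        * (Real.sin p.2)^l := by
    have hs2 : (Real.sin p.2)^2 = 1 - (Real.cos p.2)^2 := Real.sin_sq p.2
    have hpow := cast_pow_sub_one (Real.sin p.2) l
    linear_combination (((gegenbauer ((l:ℝ)-r) d).derivative.eval (Real.cos p.2)) * (Real.sin p.2)^l) * hs2
      - (((gegenbauer ((l:ℝ)-r) d).eval (Real.cos p.2)) * Real.cos p.2) * hpow
  have hexp : Complex.exp (-Complex.I * p.1)
        * Complex.exp (Complex.I * (((l : ℝ) + d - r : ℝ) : ℂ) * p.1)
      = Complex.exp (Complex.I * (((l : ℝ) + d - r - 1 : ℝ) : ℂ) * p.1) := by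
    rw [← Complex.exp_add]
    congr 1
    push_cast
    ring
  have hRC := congrArg (fun t : ℝ => (t : ℂ)) hR
  simp only [nMinus, dphi_Ffun, dtheta_Ffun, Ffun, ge, ge']
  rw [← hexp]
  push_cast at hRC ⊢
  linear_combination
    (Complex.exp (-Complex.I * p.1)
        * Complex.exp (Complex.I * ((l:ℂ) + (d:ℂ) - (r:ℂ)) * p.1)) * hRC
    - (Complex.exp (-Complex.I * p.1) * ((l:ℂ) + (d:ℂ) - (r:ℂ)) * Complex.cos (p.2:ℂ)
        * Complex.exp (Complex.I * ((l:ℂ) + (d:ℂ) - (r:ℂ)) * p.1)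
        * ((((gegenbauer ((l:ℝ)-r) d).eval (Real.cos p.2) : ℝ)):ℂ)
        * Complex.sin (p.2:ℂ) ^ l)
      * Complex.I_mul_I

lemma nMinus_Ffun_succ (r : ℝ) (l d : ℕ) (p : ℝ × ℝ) :
    nMinus r (Ffun r l (d+1)) p
      = ((((d:ℝ) + 2*((l:ℝ)-r)) : ℝ) : ℂ) * Ffun r l d p := by
  rw [nMinus_eval]
  have hb : (((d+1:ℕ):ℝ) * Real.cos p.2 * ge ((l:ℝ)-r) (d+1) (Real.cos p.2)
        + (1 - (Real.cos p.2)^2) * ge' ((l:ℝ)-r) (d+1) (Real.cos p.2)) * (Real.sin p.2)^l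
      = (((d:ℝ) + 2*((l:ℝ)-r)) * ge ((l:ℝ)-r) d (Real.cos p.2)) * (Real.sin p.2)^l := by
    have h := ge_deriv ((l:ℝ)-r) d (Real.cos p.2)
    push_cast
    linear_combination ((Real.sin p.2)^l) * h
  have hexp : Complex.exp (Complex.I * (((l : ℝ) + (d+1:ℕ) - r - 1 : ℝ) : ℂ) * p.1)
      = Complex.exp (Complex.I * (((l : ℝ) + d - r : ℝ) : ℂ) * p.1) := by
    congr 2
    push_cast
    ring
  rw [hb, hexp]
  simp only [Ffun, ge, Complex.ofReal_mul, Complex.ofReal_pow]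
  ring

lemma nMinus_Ffun_zero (r : ℝ) (l : ℕ) (p : ℝ × ℝ) :
    nMinus r (Ffun r l 0) p = 0 := by
  rw [nMinus_eval]
  simp [ge', gegenbauer]

end Aux

/-- `z·F_{p,l} = p·F_{p,l}`; `n⁻·F_{p,l}` is a scalar multiple of `F_{p-2,l}`; and
`n⁻·F_{p,l} = 0` if and only if `d = 0` (i.e. `p = 2(l-r)`). -/
theorem lowering_operator_on_basis (n : ℕ) (hn : 2 ≤ n) (r : ℝ)
    (hr : r = (1 - (n : ℝ)) / 2) (l : ℕ) :
    (∀ (d : ℕ) (p : ℝ × ℝ),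
      zOp (Ffun r l d) p = ((2 * ((l : ℝ) + d - r) : ℝ) : ℂ) * Ffun r l d p) ∧
    (∀ d : ℕ, ∃ c : ℂ, ∀ p : ℝ × ℝ, nMinus r (Ffun r l (d + 1)) p = c * Ffun r l d p) ∧
    (∀ d : ℕ, (∀ p : ℝ × ℝ, nMinus r (Ffun r l d) p = 0) ↔ d = 0) := by
  have hn' : (2:ℝ) ≤ (n:ℝ) := by exact_mod_cast hn
  have hl0 : (0:ℝ) ≤ (l:ℝ) := Nat.cast_nonneg l
  have hα : 1 ≤ 2*((l:ℝ) - r) := by rw [hr]; linarith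
  refine ⟨?_, ?_, ?_⟩
  · intro d p
    simp only [zOp, dphi_Ffun]
    push_cast
    linear_combination (-(2:ℂ)*((l:ℂ)+(d:ℂ)-(r:ℂ))*Ffun r l d p) * Complex.I_mul_I
  · intro d
    exact ⟨((((d:ℝ) + 2*((l:ℝ)-r)) : ℝ) : ℂ), fun p => nMinus_Ffun_succ r l d p⟩
  · intro d
    constructor
    · intro h
      by_contra hd
      obtain ⟨m, rfl⟩ := Nat.exists_eq_succ_of_ne_zero hd
      have hcoef : (0:ℝ) < (m:ℝ) + 2*((l:ℝ)-r) := by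
        have : (0:ℝ) ≤ (m:ℝ) := Nat.cast_nonneg m
        linarith
      have hF : ∀ p : ℝ × ℝ, Ffun r l m p = 0 := by
        intro p
        have h1 := h p
        rw [nMinus_Ffun_succ] at h1
        have h2 : ((((m:ℝ) + 2*((l:ℝ)-r)) : ℝ) : ℂ) ≠ 0 :=
          Complex.ofReal_ne_zero.mpr (ne_of_gt hcoef)
        exact (mul_eq_zero.mp h1).resolve_left h2
      have hroot : Set.Ioo (-1:ℝ) 1 ⊆ {x | (gegenbauer ((l:ℝ)-r) m).IsRoot x} := by
        intro x hx
        have hx1 : -1 ≤ x := hx.1.le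
        have hx2 : x ≤ 1 := hx.2.le
        have hsin : 0 < Real.sin (Real.arccos x) := by
          rw [Real.sin_arccos]
          apply Real.sqrt_pos.mpr
          nlinarith [hx.1, hx.2]
        have hFx := hF (0, Real.arccos x)
        simp only [Ffun] at hFx
        rw [Real.cos_arccos hx1 hx2] at hFx
        have hexp : Complex.exp (Complex.I * (((l : ℝ) + m - r : ℝ) : ℂ) * ((0:ℝ):ℂ)) ≠ 0 :=
          Complex.exp_ne_zero _
        have hsin' : (((Real.sin (Real.arccos x) : ℝ)):ℂ) ^ l ≠ 0 :=
          pow_ne_zero l (Complex.ofReal_ne_zero.mpr (ne_of_gt hsin))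
        have := (mul_eq_zero.mp hFx).resolve_right hsin'
        have := (mul_eq_zero.mp this).resolve_left hexp
        exact_mod_cast this
      have hpoly : gegenbauer ((l:ℝ)-r) m = 0 :=
        Polynomial.eq_zero_of_infinite_isRoot _
          ((Set.Ioo_infinite (by norm_num : (-1:ℝ) < 1)).mono hroot)
      have h1 := (ge_one ((l:ℝ)-r) hα m).1
      rw [ge, hpoly] at h1
      simp at h1
      linarith
    · intro hd
      subst hd
      exact fun p => nMinus_Ffun_zero r l p
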